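/- The Drach (h) system integrals I₁ = (p₁² − p₂²)/(u₁² − u₂²) − α(u₁² + u₂²) − β(u₁² + u₁u₂ + u₂²)/(u₁ + u₂) − γ/(u₁ + u₂) and I₂ = (u₂²p₁² − u₁²p₂²)/(u₁² − u₂²) − αu₁²u₂² − βu₁²u₂²/(u₁ + u₂) + γu₁u₂/(u₁ + u₂) satisfy the separated relations p_i² = αu_i⁴ + βu_i³ + I₁u_i² + γu_i − I₂ for i = 1, 2, and moreover {I₁, I₂} = 0 for the canonical Poisson bracket. -/

import Mathlib

/-- Canonical Poisson bracket of two functions on `T*ℝ²` with canonical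
coordinates `(u₁, u₂, p₁, p₂)`. -/
noncomputable def poissonBracket (F G : ℝ → ℝ → ℝ → ℝ → ℝ) (u1 u2 p1 p2 : ℝ) : ℝ :=
  deriv (fun x => F x u2 p1 p2) u1 * deriv (fun x => G u1 u2 x p2) p1
  - deriv (fun x => F u1 u2 x p2) p1 * deriv (fun x => G x u2 p1 p2) u1
  + deriv (fun x => F u1 x p1 p2) u2 * deriv (fun x => G u1 u2 p1 x) p2
  - deriv (fun x => F u1 u2 p1 x) p2 * deriv (fun x => G u1 x p1 p2) u2

/-- Drach (h) system integral `I₁`. -/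
noncomputable def drachI1 (α β γ : ℝ) : ℝ → ℝ → ℝ → ℝ → ℝ := fun u1 u2 p1 p2 =>
  (p1 ^ 2 - p2 ^ 2) / (u1 ^ 2 - u2 ^ 2) - α * (u1 ^ 2 + u2 ^ 2)
    - β * (u1 ^ 2 + u1 * u2 + u2 ^ 2) / (u1 + u2) - γ / (u1 + u2)

/-- Drach (h) system integral `I₂`. -/
noncomputable def drachI2 (α β γ : ℝ) : ℝ → ℝ → ℝ → ℝ → ℝ := fun u1 u2 p1 p2 =>
  (u2 ^ 2 * p1 ^ 2 - u1 ^ 2 * p2 ^ 2) / (u1 ^ 2 - u2 ^ 2) - α * u1 ^ 2 * u2 ^ 2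
    - β * u1 ^ 2 * u2 ^ 2 / (u1 + u2) + γ * u1 * u2 / (u1 + u2)

/-- The Drach (h) integrals satisfy the separated relations
`pᵢ² = αuᵢ⁴ + βuᵢ³ + I₁uᵢ² + γuᵢ - I₂` and Poisson-commute. -/
theorem drach_separated_and_commute (α β γ : ℝ) (u1 u2 p1 p2 : ℝ)
    (hne : u1 ^ 2 ≠ u2 ^ 2) (hsum : u1 + u2 ≠ 0) :
    (p1 ^ 2 = α * u1 ^ 4 + β * u1 ^ 3 + drachI1 α β γ u1 u2 p1 p2 * u1 ^ 2
        + γ * u1 - drachI2 α β γ u1 u2 p1 p2) ∧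
    (p2 ^ 2 = α * u2 ^ 4 + β * u2 ^ 3 + drachI1 α β γ u1 u2 p1 p2 * u2 ^ 2
        + γ * u2 - drachI2 α β γ u1 u2 p1 p2) ∧
    poissonBracket (drachI1 α β γ) (drachI2 α β γ) u1 u2 p1 p2 = 0 := by
  have hD : u1 ^ 2 - u2 ^ 2 ≠ 0 := sub_ne_zero.mpr hne
  refine ⟨?_, ?_, ?_⟩
  · simp only [drachI1, drachI2]
    field_simp
    ring
  · simp only [drachI1, drachI2]
    field_simp
    ring
  · have hx2 : ∀ y : ℝ, HasDerivAt (fun x : ℝ => x ^ 2) (2 * y) y := fun y => by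
      simpa using hasDerivAt_pow 2 y
    -- ∂I₁/∂u₁
    have d11 : HasDerivAt (fun x => (p1 ^ 2 - p2 ^ 2) / (x ^ 2 - u2 ^ 2) - α * (x ^ 2 + u2 ^ 2)
        - β * (x ^ 2 + x * u2 + u2 ^ 2) / (x + u2) - γ / (x + u2))
        (-(2 * u1 * (p1 ^ 2 - p2 ^ 2)) / (u1 ^ 2 - u2 ^ 2) ^ 2 - α * (2 * u1)
          - β * (u1 * (u1 + 2 * u2)) / (u1 + u2) ^ 2 + γ / (u1 + u2) ^ 2) u1 := by
      have h1 := (hasDerivAt_const u1 (p1 ^ 2 - p2 ^ 2)).div ((hx2 u1).sub_const (u2 ^ 2)) hD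
      have h2 := ((hx2 u1).add_const (u2 ^ 2)).const_mul α
      have h3 := ((((hx2 u1).add ((hasDerivAt_id u1).mul_const u2)).add_const (u2 ^ 2)).const_mul
        β).div ((hasDerivAt_id u1).add_const u2) hsum
      have h4 := (hasDerivAt_const u1 γ).div ((hasDerivAt_id u1).add_const u2) hsum
      refine HasDerivAt.congr_deriv (((h1.sub h2).sub h3).sub h4) ?_
      dsimp only [id, Pi.add_apply, Pi.sub_apply]
      field_simp
      ring
    -- ∂I₁/∂u₂
    have d12 : HasDerivAt (fun x => (p1 ^ 2 - p2 ^ 2) / (u1 ^ 2 - x ^ 2) - α * (u1 ^ 2 + x ^ 2)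
        - β * (u1 ^ 2 + u1 * x + x ^ 2) / (u1 + x) - γ / (u1 + x))
        ((2 * u2 * (p1 ^ 2 - p2 ^ 2)) / (u1 ^ 2 - u2 ^ 2) ^ 2 - α * (2 * u2)
          - β * (u2 * (u2 + 2 * u1)) / (u1 + u2) ^ 2 + γ / (u1 + u2) ^ 2) u2 := by
      have h1 := (hasDerivAt_const u2 (p1 ^ 2 - p2 ^ 2)).div
        ((hasDerivAt_const u2 (u1 ^ 2)).sub (hx2 u2)) hD
      have h2 := ((hx2 u2).const_add (u1 ^ 2)).const_mul α
      have h3 := (((((hasDerivAt_id u2).const_mul u1).const_add (u1 ^ 2)).add (hx2 u2)).const_mul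
        β).div ((hasDerivAt_id u2).const_add u1) hsum
      have h4 := (hasDerivAt_const u2 γ).div ((hasDerivAt_id u2).const_add u1) hsum
      refine HasDerivAt.congr_deriv (((h1.sub h2).sub h3).sub h4) ?_
      dsimp only [id, Pi.add_apply, Pi.sub_apply]
      field_simp
      ring
    -- ∂I₁/∂p₁
    have d1p1 : HasDerivAt (fun x => (x ^ 2 - p2 ^ 2) / (u1 ^ 2 - u2 ^ 2) - α * (u1 ^ 2 + u2 ^ 2)
        - β * (u1 ^ 2 + u1 * u2 + u2 ^ 2) / (u1 + u2) - γ / (u1 + u2))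
        (2 * p1 / (u1 ^ 2 - u2 ^ 2)) p1 := by
      have h1 := ((hx2 p1).sub_const (p2 ^ 2)).div_const (u1 ^ 2 - u2 ^ 2)
      exact ((h1.sub_const _).sub_const _).sub_const _
    -- ∂I₁/∂p₂
    have d1p2 : HasDerivAt (fun x => (p1 ^ 2 - x ^ 2) / (u1 ^ 2 - u2 ^ 2) - α * (u1 ^ 2 + u2 ^ 2)
        - β * (u1 ^ 2 + u1 * u2 + u2 ^ 2) / (u1 + u2) - γ / (u1 + u2))
        (-(2 * p2) / (u1 ^ 2 - u2 ^ 2)) p2 := by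
      have h1 := (((hx2 p2).const_sub (p1 ^ 2)).div_const (u1 ^ 2 - u2 ^ 2))
      exact ((h1.sub_const _).sub_const _).sub_const _
    -- ∂I₂/∂u₁
    have d21 : HasDerivAt (fun x => (u2 ^ 2 * p1 ^ 2 - x ^ 2 * p2 ^ 2) / (x ^ 2 - u2 ^ 2)
        - α * x ^ 2 * u2 ^ 2 - β * x ^ 2 * u2 ^ 2 / (x + u2) + γ * x * u2 / (x + u2))
        (-(2 * u1 * u2 ^ 2 * (p1 ^ 2 - p2 ^ 2)) / (u1 ^ 2 - u2 ^ 2) ^ 2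
          - 2 * α * u1 * u2 ^ 2 - β * (u1 * u2 ^ 2 * (u1 + 2 * u2)) / (u1 + u2) ^ 2
          + γ * u2 ^ 2 / (u1 + u2) ^ 2) u1 := by
      have h1 := ((hasDerivAt_const u1 (u2 ^ 2 * p1 ^ 2)).sub
        ((hx2 u1).mul_const (p2 ^ 2))).div ((hx2 u1).sub_const (u2 ^ 2)) hD
      have h2 := (((hx2 u1).const_mul α).mul_const (u2 ^ 2))
      have h3 := ((((hx2 u1).const_mul β).mul_const (u2 ^ 2)).div
        ((hasDerivAt_id u1).add_const u2) hsum)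
      have h4 := ((((hasDerivAt_id u1).const_mul γ).mul_const u2).div
        ((hasDerivAt_id u1).add_const u2) hsum)
      refine HasDerivAt.congr_deriv (((h1.sub h2).sub h3).add h4) ?_
      dsimp only [id, Pi.add_apply, Pi.sub_apply]
      field_simp
      ring
    -- ∂I₂/∂u₂
    have d22 : HasDerivAt (fun x => (x ^ 2 * p1 ^ 2 - u1 ^ 2 * p2 ^ 2) / (u1 ^ 2 - x ^ 2)
        - α * u1 ^ 2 * x ^ 2 - β * u1 ^ 2 * x ^ 2 / (u1 + x) + γ * u1 * x / (u1 + x))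
        ((2 * u1 ^ 2 * u2 * (p1 ^ 2 - p2 ^ 2)) / (u1 ^ 2 - u2 ^ 2) ^ 2
          - 2 * α * u1 ^ 2 * u2 - β * (u1 ^ 2 * u2 * (u2 + 2 * u1)) / (u1 + u2) ^ 2
          + γ * u1 ^ 2 / (u1 + u2) ^ 2) u2 := by
      have h1 := (((hx2 u2).mul_const (p1 ^ 2)).sub_const (u1 ^ 2 * p2 ^ 2)).div
        ((hasDerivAt_const u2 (u1 ^ 2)).sub (hx2 u2)) hD
      have h2 := ((hx2 u2).const_mul (α * u1 ^ 2))
      have h3 := (((hx2 u2).const_mul (β * u1 ^ 2)).div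
        ((hasDerivAt_id u2).const_add u1) hsum)
      have h4 := (((hasDerivAt_id u2).const_mul (γ * u1)).div
        ((hasDerivAt_id u2).const_add u1) hsum)
      refine HasDerivAt.congr_deriv (((h1.sub h2).sub h3).add h4) ?_
      dsimp only [id, Pi.add_apply, Pi.sub_apply]
      field_simp
      ring
    -- ∂I₂/∂p₁
    have d2p1 : HasDerivAt (fun x => (u2 ^ 2 * x ^ 2 - u1 ^ 2 * p2 ^ 2) / (u1 ^ 2 - u2 ^ 2)
        - α * u1 ^ 2 * u2 ^ 2 - β * u1 ^ 2 * u2 ^ 2 / (u1 + u2) + γ * u1 * u2 / (u1 + u2))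
        (2 * u2 ^ 2 * p1 / (u1 ^ 2 - u2 ^ 2)) p1 := by
      have h1 := (((hx2 p1).const_mul (u2 ^ 2)).sub_const (u1 ^ 2 * p2 ^ 2)).div_const
        (u1 ^ 2 - u2 ^ 2)
      refine HasDerivAt.congr_deriv (((h1.sub_const _).sub_const _).add_const _) ?_
      ring
    -- ∂I₂/∂p₂
    have d2p2 : HasDerivAt (fun x => (u2 ^ 2 * p1 ^ 2 - u1 ^ 2 * x ^ 2) / (u1 ^ 2 - u2 ^ 2)
        - α * u1 ^ 2 * u2 ^ 2 - β * u1 ^ 2 * u2 ^ 2 / (u1 + u2) + γ * u1 * u2 / (u1 + u2))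
        (-(2 * u1 ^ 2 * p2) / (u1 ^ 2 - u2 ^ 2)) p2 := by
      have h1 := ((hasDerivAt_const p2 (u2 ^ 2 * p1 ^ 2)).sub
        ((hx2 p2).const_mul (u1 ^ 2))).div_const (u1 ^ 2 - u2 ^ 2)
      refine HasDerivAt.congr_deriv (((h1.sub_const _).sub_const _).add_const _) ?_
      ring
    rw [poissonBracket]
    simp only [drachI1, drachI2]
    rw [d11.deriv, d12.deriv, d1p1.deriv, d1p2.deriv, d21.deriv, d22.deriv, d2p1.deriv,
      d2p2.deriv]
    ring
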